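/- Let q be a real number with 0<q<1 and let w>0, w₁>0 be real. Then the Barnes-type Changhee q-zeta function s ↦ ζ_q(s,w|w₁) = -(1-q)^s/((s-1)·log q) + w₁·Σ_{k=0}^∞ q^{w₁k+w}·[w₁k+w]_q^{-s} is complex differentiable at every s∈ℂ with s≠1; in particular the series part s ↦ w₁·Σ_{k=0}^∞ q^{w₁k+w}·[w₁k+w]_q^{-s} is an entire function of s, so ζ_q(·,w|w₁) is analytic on ℂ with its only singularity a simple pole at s=1. -/

import Mathlib

open Complex

noncomputable def qNum (q y : ℝ) : ℝ := (1 - q ^ y) / (1 - q)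

noncomputable def chZeta (q : ℝ) (s : ℂ) (w w₁ : ℝ) : ℂ :=
  -((1 - q : ℝ) : ℂ) ^ s / ((s - 1) * ((Real.log q : ℝ) : ℂ)) +
    (w₁ : ℂ) * ∑' k : ℕ, ((q ^ (w₁ * (k : ℝ) + w) : ℝ) : ℂ) *
      ((qNum q (w₁ * (k : ℝ) + w) : ℝ) : ℂ) ^ (-s)

/-- The series part of the Barnes-type Changhee `q`-zeta function is an entire function of `s`,
and `ζ_q(·, w | w₁)` is analytic on `ℂ ∖ {1}` (its only singularity is a simple pole at `s=1`). -/
theorem stmt15 (q : ℝ) (hq0 : 0 < q) (hq1 : q < 1) (w w₁ : ℝ) (hw : 0 < w) (hw₁ : 0 < w₁) :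
    Differentiable ℂ (fun s : ℂ => (w₁ : ℂ) * ∑' k : ℕ,
      ((q ^ (w₁ * (k : ℝ) + w) : ℝ) : ℂ) * ((qNum q (w₁ * (k : ℝ) + w) : ℝ) : ℂ) ^ (-s)) ∧
    ∀ s : ℂ, s ≠ 1 → DifferentiableAt ℂ (fun s : ℂ => chZeta q s w w₁) s := by
  have h1q : (0:ℝ) < 1 - q := by linarith
  set y : ℕ → ℝ := fun k => w₁ * (k : ℝ) + w with hy
  have hypos : ∀ k, 0 < y k := fun k => by
    have : 0 ≤ w₁ * (k : ℝ) := mul_nonneg hw₁.le (Nat.cast_nonneg k)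
    simp only [hy]; linarith
  have hqy : ∀ k, q ^ (y k) < 1 := fun k => Real.rpow_lt_one hq0.le hq1 (hypos k)
  have hqypos : ∀ k, 0 < q ^ (y k) := fun k => Real.rpow_pos_of_pos hq0 _
  set b : ℕ → ℝ := fun k => qNum q (y k) with hbdef
  have hbpos : ∀ k, 0 < b k := fun k =>
    div_pos (by linarith [hqy k]) h1q
  have hbleM : ∀ k, b k ≤ (1 - q)⁻¹ := fun k => by
    rw [hbdef]
    unfold qNum
    rw [div_le_iff₀ h1q]
    have := hqypos k
    field_simp
    linarith
  have hbgem : ∀ k, qNum q w ≤ b k := fun k => by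
    have hle : q ^ (y k) ≤ q ^ w := by
      apply Real.rpow_le_rpow_of_exponent_ge hq0 hq1.le
      have : 0 ≤ w₁ * (k : ℝ) := mul_nonneg hw₁.le (Nat.cast_nonneg k)
      simp only [hy]; linarith
    show qNum q w ≤ qNum q (y k)
    unfold qNum
    gcongr
  have hmpos : 0 < qNum q w := by
    have : q ^ w < 1 := Real.rpow_lt_one hq0.le hq1 hw
    exact div_pos (by linarith) h1q
  -- summability of the geometric majorant
  have hr1 : q ^ w₁ < 1 := Real.rpow_lt_one hq0.le hq1 hw₁
  have hr0 : 0 < q ^ w₁ := Real.rpow_pos_of_pos hq0 _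
  have hsum : Summable (fun k : ℕ => q ^ (y k)) := by
    have : ∀ k : ℕ, q ^ (y k) = q ^ w * (q ^ w₁) ^ k := by
      intro k
      rw [hy]
      simp only []
      rw [Real.rpow_add hq0, mul_comm (q ^ (w₁ * (k:ℝ)))]
      congr 1
      rw [Real.rpow_mul hq0.le, Real.rpow_natCast]
    simp_rw [this]
    exact (summable_geometric_of_lt_one hr0.le hr1).mul_left _
  -- bound on log b k
  set Λ : ℝ := max |Real.log (qNum q w)| |Real.log ((1 - q)⁻¹)| with hΛ
  have hlogb : ∀ k, |Real.log (b k)| ≤ Λ := fun k => by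
    rw [abs_le]
    constructor
    · calc -Λ ≤ -|Real.log (qNum q w)| := by simp [hΛ]
        _ ≤ Real.log (qNum q w) := neg_abs_le _
        _ ≤ Real.log (b k) := Real.log_le_log hmpos (hbgem k)
    · calc Real.log (b k) ≤ Real.log ((1-q)⁻¹) :=
          Real.log_le_log (hbpos k) (hbleM k)
        _ ≤ |Real.log ((1-q)⁻¹)| := le_abs_self _
        _ ≤ Λ := le_max_right _ _
  -- the series part is entire
  have key : ∀ s₀ : ℂ, DifferentiableAt ℂ (fun s : ℂ => ∑' k : ℕ,
      ((q ^ (y k) : ℝ) : ℂ) * ((b k : ℝ) : ℂ) ^ (-s)) s₀ := by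
    intro s₀
    set T : ℝ := |s₀.re| + 1 with hT
    set C : ℝ := Real.exp (T * Λ) with hC
    have hdiff : DifferentiableOn ℂ (fun s : ℂ => ∑' k : ℕ,
        ((q ^ (y k) : ℝ) : ℂ) * ((b k : ℝ) : ℂ) ^ (-s)) (Metric.ball s₀ 1) := by
      apply differentiableOn_tsum_of_summable_norm (u := fun k => q ^ (y k) * C)
        (hsum.mul_right C)
      · intro k
        apply DifferentiableOn.const_mul
        apply DifferentiableOn.const_cpow
        · exact (differentiable_id.neg).differentiableOn
        · exact Or.inl (by exact_mod_cast (hbpos k).ne')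
      · exact Metric.isOpen_ball
      · intro k z hz
        rw [norm_mul]
        have h1 : ‖((q ^ (y k) : ℝ) : ℂ)‖ = q ^ (y k) := by
          rw [Complex.norm_real, Real.norm_of_nonneg (hqypos k).le]
        have h2 : ‖((b k : ℝ) : ℂ) ^ (-z)‖ = (b k) ^ (-z).re := by
          rw [Complex.norm_cpow_eq_rpow_re_of_pos (hbpos k)]
        rw [h1, h2]
        apply mul_le_mul_of_nonneg_left _ (hqypos k).le
        rw [Real.rpow_def_of_pos (hbpos k), hC]
        apply Real.exp_le_exp.mpr
        have hz' : dist z s₀ < 1 := Metric.mem_ball.mp hz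
        have hre : |z.re - s₀.re| ≤ dist z s₀ := by
          simpa [dist_eq_norm] using Complex.abs_re_le_norm (z - s₀)
        have hzre : |z.re| ≤ T := by
          calc |z.re| = |s₀.re + (z.re - s₀.re)| := by ring_nf
            _ ≤ |s₀.re| + |z.re - s₀.re| := abs_add_le _ _
            _ ≤ |s₀.re| + 1 := by linarith
        calc Real.log (b k) * (-z).re ≤ |Real.log (b k) * (-z).re| := le_abs_self _
          _ = |Real.log (b k)| * |z.re| := by rw [abs_mul, Complex.neg_re, abs_neg]
          _ ≤ Λ * T := mul_le_mul (hlogb k) hzre (abs_nonneg _) (by positivity)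
          _ = T * Λ := mul_comm _ _
    exact (hdiff.differentiableAt (Metric.isOpen_ball.mem_nhds (Metric.mem_ball_self one_pos)))
  have hseries : Differentiable ℂ (fun s : ℂ => (w₁ : ℂ) * ∑' k : ℕ,
      ((q ^ (w₁ * (k : ℝ) + w) : ℝ) : ℂ) * ((qNum q (w₁ * (k : ℝ) + w) : ℝ) : ℂ) ^ (-s)) :=
    fun s₀ => ((key s₀).const_mul _)
  refine ⟨hseries, fun s hs => ?_⟩
  have hfirst : DifferentiableAt ℂ
      (fun s : ℂ => -((1 - q : ℝ) : ℂ) ^ s / ((s - 1) * ((Real.log q : ℝ) : ℂ))) s := by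
    apply DifferentiableAt.div
    · exact (differentiableAt_id.const_cpow (Or.inl (by exact_mod_cast h1q.ne'))).neg
    · exact (differentiableAt_id.sub_const 1).mul_const _
    · apply mul_ne_zero (sub_ne_zero.mpr hs)
      have : Real.log q ≠ 0 := ne_of_lt (Real.log_neg hq0 hq1)
      exact_mod_cast this
  have h := hfirst.add (hseries s)
  unfold chZeta
  exact h
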